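/- arXiv:0708.1654 — 2 statements merged into one kernel-verified Lean document; each statement's English description precedes it below -/
import Mathlib

section
/- Let g be a DG Lie algebra over a field K of characteristic 0, m a nilpotent commutative non-unital K-algebra, γ ∈ m⊗g^0, and define af(γ)(ω) := [γ,ω] − d(γ) for ω ∈ m⊗g^1. If ω satisfies the Maurer–Cartan equation d(ω) + ½[ω,ω] = 0, then the gauge-transformed element exp(af(γ))(ω) (which is well defined since af(γ) is locally nilpotent) also satisfies the Maurer–Cartan equation. -/
/-- A differential graded Lie algebra over `K`, with degree bookkeeping done
via explicit index equalities. -/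
structure DGLA (K : Type) [Field K] where
  carrier : ℤ → Type
  [acg : ∀ i, AddCommGroup (carrier i)]
  [mod : ∀ i, Module K (carrier i)]
  d : ∀ i j, i + 1 = j → carrier i →ₗ[K] carrier j
  br : ∀ i j k, i + j = k → carrier i →ₗ[K] carrier j →ₗ[K] carrier k
  d_sq : ∀ i j k (hij : i + 1 = j) (hjk : j + 1 = k) (x : carrier i),
    d j k hjk (d i j hij x) = 0
  antisym : ∀ i j k (h1 : i + j = k) (h2 : j + i = k) (x : carrier i)
    (y : carrier j), br i j k h1 x y = (-((i * j).negOnePow : ℤ)) • br j i k h2 y x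
  leibniz : ∀ i j k k' i' j' (hij : i + j = k) (hk : k + 1 = k')
    (hi : i + 1 = i') (hj : j + 1 = j') (h1 : i' + j = k') (h2 : i + j' = k')
    (x : carrier i) (y : carrier j),
    d k k' hk (br i j k hij x y)
      = br i' j k' h1 (d i i' hi x) y
        + (i.negOnePow : ℤ) • br i j' k' h2 x (d j j' hj y)
  jacobi : ∀ i j k p q r s (hjk : j + k = p) (h1 : i + p = q) (hij : i + j = r)
    (h2 : r + k = q) (hik : i + k = s) (h3 : j + s = q)
    (x : carrier i) (y : carrier j) (z : carrier k),
    br i p q h1 x (br j k p hjk y z)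
      = br r k q h2 (br i j r hij x y) z
        + ((i * j).negOnePow : ℤ) • br j s q h3 y (br i k s hik x z)

attribute [instance] DGLA.acg DGLA.mod
/- STATEMENT 12: Gauge transformations preserve the Maurer–Cartan equation.
In the DG Lie algebra `m ⊗ g` (axiomatized as a DG Lie algebra `g` in which
the nilpotency of the non-unital algebra `m` makes `ad(γ)` nilpotent in each
degree, say `ad(γ)^N = 0`), for `γ` of degree 0 the exponential of the
affine vector field `af(γ)(ω) = [γ,ω] − d(γ)` is well defined, and is given
by the (finite) gauge formula
`exp(af(γ))(ω) = Σ_{k<N} (1/k!)·ad(γ)^k(ω) − Σ_{k<N} (1/(k+1)!)·ad(γ)^k(dγ)`.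
If `ω` satisfies `dω + ½[ω,ω] = 0`, so does `exp(af(γ))(ω)`. -/

open Finset

private lemma tri_sum {β : Type*} [AddCommMonoid β] (M : ℕ) (f : ℕ → ℕ → β) :
    ∑ k ∈ range M, ∑ m ∈ range (k + 1), f m (k - m)
      = ∑ i ∈ range M, ∑ j ∈ range (M - i), f i j := by
  induction M with
  | zero => simp
  | succ M ih =>
    have h1 : ∀ i ∈ range M, ∑ j ∈ range (M + 1 - i), f i j
        = ∑ j ∈ range (M - i), f i j + f i (M - i) := by
      intro i hi
      rw [mem_range] at hi
      have h : M + 1 - i = (M - i) + 1 := by omega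
      rw [h, sum_range_succ]
    have hR : ∑ i ∈ range (M + 1), ∑ j ∈ range (M + 1 - i), f i j
        = (∑ i ∈ range M, ∑ j ∈ range (M - i), f i j) + ∑ i ∈ range (M + 1), f i (M - i) := by
      rw [sum_range_succ, sum_congr rfl h1, sum_add_distrib, sum_range_succ _ M]
      have h2 : M + 1 - M = 1 := by omega
      rw [h2, sum_range_one]
      simp only [Nat.sub_self]
      abel
    rw [sum_range_succ, ih, hR]

private lemma hockey (m : ℕ) (t : ℕ) :
    ∑ j ∈ range t, (m + j).choose m = (m + t).choose (m + 1) := by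
  induction t with
  | zero => simp
  | succ t ih =>
    rw [sum_range_succ, ih]
    have h : m + (t + 1) = (m + t) + 1 := by omega
    rw [h, Nat.choose_succ_succ']
    omega

private lemma fact_inv_choose (K : Type) [Field K] [CharZero K] {m k : ℕ} (h : m ≤ k) :
    ((k.factorial : K))⁻¹ * (k.choose m : K)
      = ((m.factorial : K))⁻¹ * (((k - m).factorial : K))⁻¹ := by
  have hk := Nat.choose_mul_factorial_mul_factorial h
  have h1 : (k.choose m : K) * (m.factorial : K) * ((k - m).factorial : K) = (k.factorial : K) := by
    exact_mod_cast congrArg (Nat.cast (R := K)) hk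
  have f1 : (k.factorial : K) ≠ 0 := Nat.cast_ne_zero.mpr k.factorial_ne_zero
  have f2 : (m.factorial : K) ≠ 0 := Nat.cast_ne_zero.mpr m.factorial_ne_zero
  have f3 : (((k - m).factorial : K)) ≠ 0 := Nat.cast_ne_zero.mpr (k - m).factorial_ne_zero
  field_simp
  linear_combination h1

private lemma gauge_aux (K : Type) [Field K] [CharZero K]
    {V₁ V₂ : Type} [AddCommGroup V₁] [AddCommGroup V₂] [Module K V₁] [Module K V₂]
    (A : Module.End K V₁) (A₂ : Module.End K V₂)
    (d : V₁ →ₗ[K] V₂) (β : V₁ →ₗ[K] V₁ →ₗ[K] V₂) (δ ω : V₁)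
    (N : ℕ) (hN : 0 < N) (hAN : A ^ N = 0) (hA2N : A₂ ^ N = 0)
    (hsym : ∀ x y, β x y = β y x)
    (hleib : ∀ x, d (A x) = β δ x + A₂ (d x))
    (hjac : ∀ y z, A₂ (β y z) = β (A y) z + β y (A z))
    (hdδ : d δ = 0)
    (hMC : d ω + (1 / 2 : K) • β ω ω = 0) :
    d (∑ k ∈ range N, ((k.factorial : K)⁻¹ • (A ^ k) ω)
        - ∑ k ∈ range N, (((k + 1).factorial : K)⁻¹ • (A ^ k) δ))
      + (1 / 2 : K) • β (∑ k ∈ range N, ((k.factorial : K)⁻¹ • (A ^ k) ω)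
          - ∑ k ∈ range N, (((k + 1).factorial : K)⁻¹ • (A ^ k) δ))
        (∑ k ∈ range N, ((k.factorial : K)⁻¹ • (A ^ k) ω)
          - ∑ k ∈ range N, (((k + 1).factorial : K)⁻¹ • (A ^ k) δ)) = 0 := by
  set M := 2 * N with hMdef
  have hNM : N ≤ M := by omega
  have hAz : ∀ i, N ≤ i → (A ^ i) = (0 : Module.End K V₁) := by
    intro i hi
    have h : A ^ i = A ^ (i - N) * A ^ N := by
      rw [← pow_add]; congr 1; omega
    rw [h, hAN, mul_zero]
  have hvan : ∀ (x y : V₁) (i j : ℕ), N ≤ i ∨ N ≤ j → β ((A ^ i) x) ((A ^ j) y) = 0 := by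
    intro x y i j h
    rcases h with h | h
    · rw [hAz i h]; simp
    · rw [hAz j h]; simp
  set u := ∑ k ∈ range M, (k.factorial : K)⁻¹ • (A ^ k) ω with hu
  set v := ∑ k ∈ range M, ((k + 1).factorial : K)⁻¹ • (A ^ k) δ with hv
  have hEu : ∑ k ∈ range N, ((k.factorial : K)⁻¹ • (A ^ k) ω) = u := by
    rw [hu]
    apply sum_subset (range_subset_range.mpr hNM)
    intro k hk hk'
    rw [mem_range] at hk hk'
    rw [hAz k (by omega), LinearMap.zero_apply, smul_zero]
  have hEv : ∑ k ∈ range N, (((k + 1).factorial : K)⁻¹ • (A ^ k) δ) = v := by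
    rw [hv]
    apply sum_subset (range_subset_range.mpr hNM)
    intro k hk hk'
    rw [mem_range] at hk hk'
    rw [hAz k (by omega), LinearMap.zero_apply, smul_zero]
  -- binomial expansion of powers of A₂ on brackets
  have L2 : ∀ (i : ℕ) (y z : V₁), (A₂ ^ i) (β y z)
      = ∑ m ∈ range (i + 1), (i.choose m : K) • β ((A ^ m) y) ((A ^ (i - m)) z) := by
    intro i
    induction i with
    | zero => intro y z; simp
    | succ i ih =>
      intro y z
      rw [pow_succ, Module.End.mul_apply, hjac, map_add, ih, ih]
      have e1 : ∀ m ∈ range (i + 1), (i.choose m : K) • β ((A ^ m) (A y)) ((A ^ (i - m)) z)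
          = (i.choose m : K) • β ((A ^ (m + 1)) y) ((A ^ (i - m)) z) := by
        intro m _
        rw [pow_succ, Module.End.mul_apply]
      have e2 : ∀ m ∈ range (i + 1), (i.choose m : K) • β ((A ^ m) y) ((A ^ (i - m)) (A z))
          = (i.choose m : K) • β ((A ^ m) y) ((A ^ (i + 1 - m)) z) := by
        intro m hm
        rw [mem_range] at hm
        have h : i + 1 - m = (i - m) + 1 := by omega
        rw [h, pow_succ, Module.End.mul_apply]
      have eL : ∑ m ∈ range (i + 1), (i.choose m : K) • β ((A ^ m) y) ((A ^ (i + 1 - m)) z)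
          = (∑ m ∈ range (i + 1), (i.choose (m + 1) : K) • β ((A ^ (m + 1)) y) ((A ^ (i - m)) z))
            + β ((A ^ 0) y) ((A ^ (i + 1)) z) := by
        rw [sum_range_succ' _ i]
        congr 1
        all_goals first
          | (simp; done)
          | (rw [sum_range_succ]
             have hz : (i.choose (i + 1) : K) = 0 := by
               rw [Nat.choose_succ_self]; norm_num
             rw [hz, zero_smul, add_zero]
             apply sum_congr rfl
             intro m hm
             rw [mem_range] at hm
             have h : i + 1 - (m + 1) = i - m := by omega
             rw [h])
      have eR : ∑ m ∈ range (i + 2), ((i + 1).choose m : K) • β ((A ^ m) y) ((A ^ (i + 1 - m)) z)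
          = (∑ m ∈ range (i + 1), ((i + 1).choose (m + 1) : K) • β ((A ^ (m + 1)) y) ((A ^ (i - m)) z))
            + β ((A ^ 0) y) ((A ^ (i + 1)) z) := by
        rw [sum_range_succ' _ (i + 1)]
        congr 1
        all_goals first
          | (simp; done)
          | (apply sum_congr rfl
             intro m hm
             rw [mem_range] at hm
             have h : i + 1 - (m + 1) = i - m := by omega
             rw [h])
      rw [sum_congr rfl e1, sum_congr rfl e2, eL, eR, ← add_assoc, ← sum_add_distrib]
      congr 1
      apply sum_congr rfl
      intro m hm
      rw [← add_smul]
      congr 1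
      norm_cast
  -- iterated Leibniz
  have L1 : ∀ (k : ℕ) (x : V₁), d ((A ^ k) x)
      = (∑ i ∈ range k, (A₂ ^ i) (β δ ((A ^ (k - 1 - i)) x))) + (A₂ ^ k) (d x) := by
    intro k
    induction k with
    | zero => intro x; simp
    | succ k ih =>
      intro x
      have h1 : (A ^ (k + 1)) x = (A ^ k) (A x) := by rw [pow_succ, Module.End.mul_apply]
      rw [h1, ih (A x), hleib, map_add]
      have e1 : ∀ i ∈ range k, (A₂ ^ i) (β δ ((A ^ (k - 1 - i)) (A x)))
          = (A₂ ^ i) (β δ ((A ^ (k - i)) x)) := by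
        intro i hi
        rw [mem_range] at hi
        have h : (A ^ (k - 1 - i)) (A x) = (A ^ (k - i)) x := by
          have h2 : k - i = (k - 1 - i) + 1 := by omega
          rw [h2, pow_succ, Module.End.mul_apply]
        rw [h]
      rw [sum_congr rfl e1]
      have h3 : (A₂ ^ k) (A₂ (d x)) = (A₂ ^ (k + 1)) (d x) := by
        rw [pow_succ, Module.End.mul_apply]
      rw [h3]
      have h4 : ∑ i ∈ range (k + 1), (A₂ ^ i) (β δ ((A ^ (k + 1 - 1 - i)) x))
          = (∑ i ∈ range k, (A₂ ^ i) (β δ ((A ^ (k - i)) x))) + (A₂ ^ k) (β δ x) := by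
        rw [sum_range_succ]
        congr 1
        all_goals first
          | (have h : k + 1 - 1 - k = 0 := by omega
             rw [h, pow_zero, Module.End.one_apply])
          | (apply sum_congr rfl
             intro i hi
             rw [mem_range] at hi
             have h : k + 1 - 1 - i = k - i := by omega
             rw [h])
      rw [h4]
      abel
  -- bilinear expansion of β on sums
  have hbexp : ∀ (x y : V₁) (c e : ℕ → K),
      β (∑ k ∈ range M, c k • (A ^ k) x) (∑ k ∈ range M, e k • (A ^ k) y)
        = ∑ i ∈ range M, ∑ j ∈ range M, (c i * e j) • β ((A ^ i) x) ((A ^ j) y) := by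
    intro x y c e
    simp only [map_sum, map_smul, LinearMap.sum_apply, LinearMap.smul_apply, smul_sum,
      smul_smul]
    rw [Finset.sum_comm]
    apply sum_congr rfl
    intro i _
    apply sum_congr rfl
    intro j _
    rw [mul_comm]
  -- triangle-to-square extension
  have hext : ∀ (F : ℕ → ℕ → V₂) (T : ℕ), T ≤ M → (∀ i j, T ≤ i + j → F i j = 0) →
      ∑ i ∈ range T, ∑ j ∈ range (T - i), F i j = ∑ i ∈ range M, ∑ j ∈ range M, F i j := by
    intro F T hT h0
    have step : ∑ i ∈ range T, ∑ j ∈ range (T - i), F i j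
        = ∑ i ∈ range T, ∑ j ∈ range M, F i j := by
      apply sum_congr rfl
      intro i hi
      rw [mem_range] at hi
      apply sum_subset (range_subset_range.mpr (by omega))
      intro j hj hj'
      rw [mem_range] at hj hj'
      exact h0 i j (by omega)
    rw [step]
    apply sum_subset (range_subset_range.mpr hT)
    intro i hi hi'
    rw [mem_range] at hi hi'
    exact sum_eq_zero fun j hj => h0 i j (by omega)
  -- shift lemma
  have hshift : ∀ (G : ℕ → V₂), G 0 = 0 →
      ∑ k ∈ range M, G k = ∑ t ∈ range (M - 1), G (t + 1) := by
    intro G hG0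
    obtain ⟨M', hM'⟩ : ∃ M', M = M' + 1 := ⟨M - 1, by omega⟩
    rw [hM', sum_range_succ', hG0, add_zero]
    congr 1
  -- key structural sum
  have keyS : ∀ (x : V₁) (c : ℕ → K),
      ∑ k ∈ range M, c k • ∑ i ∈ range k, (A₂ ^ i) (β δ ((A ^ (k - 1 - i)) x))
        = ∑ i ∈ range M, ∑ j ∈ range M,
            (c (i + j + 1) * ((i + j + 1).choose (i + 1) : K)) • β ((A ^ i) δ) ((A ^ j) x) := by
    intro x c
    have step1 : ∀ k, ∑ i ∈ range k, (A₂ ^ i) (β δ ((A ^ (k - 1 - i)) x))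
        = ∑ m ∈ range k, (k.choose (m + 1) : K) • β ((A ^ m) δ) ((A ^ (k - 1 - m)) x) := by
      intro k
      have e1 : ∀ i ∈ range k, (A₂ ^ i) (β δ ((A ^ (k - 1 - i)) x))
          = ∑ m ∈ range (i + 1),
              (((m + (i - m)).choose m : K)) • β ((A ^ m) δ) ((A ^ (k - 1 - m)) x) := by
        intro i hi
        rw [mem_range] at hi
        rw [L2 i δ ((A ^ (k - 1 - i)) x)]
        apply sum_congr rfl
        intro m hm
        rw [mem_range] at hm
        have hx : (A ^ (i - m)) ((A ^ (k - 1 - i)) x) = (A ^ (k - 1 - m)) x := by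
          rw [← Module.End.mul_apply, ← pow_add]
          congr 2
          omega
        have hc : m + (i - m) = i := by omega
        rw [hx, hc]
      rw [sum_congr rfl e1,
        tri_sum k (fun a b => ((a + b).choose a : K) • β ((A ^ a) δ) ((A ^ (k - 1 - a)) x))]
      apply sum_congr rfl
      intro m hm
      rw [mem_range] at hm
      rw [← sum_smul]
      congr 1
      rw [← Nat.cast_sum]
      congr 1
      rw [hockey m (k - m)]
      congr 1
      omega
    have step2 : ∑ k ∈ range M, c k • ∑ i ∈ range k, (A₂ ^ i) (β δ ((A ^ (k - 1 - i)) x))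
        = ∑ k ∈ range M, ∑ m ∈ range k,
            (c k * (k.choose (m + 1) : K)) • β ((A ^ m) δ) ((A ^ (k - 1 - m)) x) := by
      apply sum_congr rfl
      intro k _
      rw [step1 k, smul_sum]
      apply sum_congr rfl
      intro m _
      rw [smul_smul]
    rw [step2, hshift (fun k => ∑ m ∈ range k,
        (c k * (k.choose (m + 1) : K)) • β ((A ^ m) δ) ((A ^ (k - 1 - m)) x)) (by simp)]
    have step3 : ∀ t ∈ range (M - 1),
        ∑ m ∈ range (t + 1), (c (t + 1) * ((t + 1).choose (m + 1) : K)) • β ((A ^ m) δ) ((A ^ (t + 1 - 1 - m)) x)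
          = ∑ m ∈ range (t + 1),
              (fun a b => (c (a + b + 1) * ((a + b + 1).choose (a + 1) : K)) • β ((A ^ a) δ) ((A ^ b) x)) m (t - m) := by
      intro t ht
      apply sum_congr rfl
      intro m hm
      rw [mem_range] at hm
      simp only
      have h1 : m + (t - m) + 1 = t + 1 := by omega
      have h2 : t + 1 - 1 - m = t - m := by omega
      rw [h1, h2]
    rw [sum_congr rfl step3,
      tri_sum (M - 1) (fun a b => (c (a + b + 1) * ((a + b + 1).choose (a + 1) : K)) • β ((A ^ a) δ) ((A ^ b) x)),
      hext (fun a b => (c (a + b + 1) * ((a + b + 1).choose (a + 1) : K)) • β ((A ^ a) δ) ((A ^ b) x))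
        (M - 1) (by omega) ?_]
    intro i j hij
    rw [hvan δ x i j (by omega), smul_zero]
  -- key equation for d u
  have keyD : d u = (∑ k ∈ range M, (k.factorial : K)⁻¹ • (A₂ ^ k) (d ω)) + β v u := by
    have h0 : d u = ∑ k ∈ range M, (k.factorial : K)⁻¹ • d ((A ^ k) ω) := by
      rw [hu, map_sum]
      apply sum_congr rfl
      intro k _
      rw [map_smul]
    have h1 : ∀ k ∈ range M, (k.factorial : K)⁻¹ • d ((A ^ k) ω)
        = ((k.factorial : K)⁻¹ • ∑ i ∈ range k, (A₂ ^ i) (β δ ((A ^ (k - 1 - i)) ω)))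
          + (k.factorial : K)⁻¹ • (A₂ ^ k) (d ω) := by
      intro k _
      rw [L1 k ω, smul_add]
    have hS : (∑ k ∈ range M, (k.factorial : K)⁻¹ • ∑ i ∈ range k, (A₂ ^ i) (β δ ((A ^ (k - 1 - i)) ω)))
        = β v u := by
      rw [keyS ω (fun k => (k.factorial : K)⁻¹), hv, hu,
        hbexp δ ω (fun m => ((m + 1).factorial : K)⁻¹) (fun p => (p.factorial : K)⁻¹)]
      apply sum_congr rfl
      intro i _
      apply sum_congr rfl
      intro j _
      congr 1
      have h2 : i + 1 ≤ i + j + 1 := by omega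
      have h3 : (i + j + 1) - (i + 1) = j := by omega
      rw [fact_inv_choose K h2, h3]
    rw [h0, sum_congr rfl h1, sum_add_distrib, hS]
    exact add_comm _ _
  -- key equation for d v
  have keyV : d v = (1 / 2 : K) • β v v := by
    have h0 : d v = ∑ k ∈ range M,
        ((k + 1).factorial : K)⁻¹ • ∑ i ∈ range k, (A₂ ^ i) (β δ ((A ^ (k - 1 - i)) δ)) := by
      rw [hv, map_sum]
      apply sum_congr rfl
      intro k _
      rw [map_smul, L1 k δ, hdδ, map_zero, add_zero]
    have hcoef : ∀ i j : ℕ,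
        ((((i + j + 1) + 1).factorial : K)⁻¹ * ((i + j + 1).choose (i + 1) : K))
          + ((((j + i + 1) + 1).factorial : K)⁻¹ * ((j + i + 1).choose (j + 1) : K))
        = ((i + 1).factorial : K)⁻¹ * ((j + 1).factorial : K)⁻¹ := by
      intro i j
      have hji : j + i = i + j := Nat.add_comm j i
      rw [hji]
      have hsymm : (i + j + 1).choose (j + 1) = (i + j + 1).choose i := by
        rw [← Nat.choose_symm (by omega : j + 1 ≤ i + j + 1)]
        congr 1
        omega
      rw [hsymm]
      have hpas : ((i + j + 1) + 1).choose (i + 1)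
          = (i + j + 1).choose i + (i + j + 1).choose (i + 1) := Nat.choose_succ_succ' (i + j + 1) i
      have hfc := fact_inv_choose K (show i + 1 ≤ (i + j + 1) + 1 by omega)
      have hsub : ((i + j + 1) + 1) - (i + 1) = j + 1 := by omega
      rw [hsub] at hfc
      rw [← hfc, hpas]
      push_cast
      ring
    have hswap : (∑ i ∈ range M, ∑ j ∈ range M,
          ((fun k => ((k + 1).factorial : K)⁻¹) (i + j + 1) * ((i + j + 1).choose (i + 1) : K)) • β ((A ^ i) δ) ((A ^ j) δ))
        = ∑ i ∈ range M, ∑ j ∈ range M,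
          ((fun k => ((k + 1).factorial : K)⁻¹) (j + i + 1) * ((j + i + 1).choose (j + 1) : K)) • β ((A ^ i) δ) ((A ^ j) δ) := by
      rw [Finset.sum_comm]
      apply sum_congr rfl
      intro i _
      apply sum_congr rfl
      intro j _
      congr 1
      exact hsym _ _
    have hvv : β v v = ∑ i ∈ range M, ∑ j ∈ range M,
        (((i + 1).factorial : K)⁻¹ * ((j + 1).factorial : K)⁻¹) • β ((A ^ i) δ) ((A ^ j) δ) := by
      rw [hv, hbexp δ δ (fun m => ((m + 1).factorial : K)⁻¹) (fun m => ((m + 1).factorial : K)⁻¹)]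
    rw [h0, keyS δ (fun k => ((k + 1).factorial : K)⁻¹), hvv]
    have hTT : (∑ i ∈ range M, ∑ j ∈ range M,
          ((fun k => ((k + 1).factorial : K)⁻¹) (i + j + 1) * ((i + j + 1).choose (i + 1) : K)) • β ((A ^ i) δ) ((A ^ j) δ))
        + (∑ i ∈ range M, ∑ j ∈ range M,
          ((fun k => ((k + 1).factorial : K)⁻¹) (i + j + 1) * ((i + j + 1).choose (i + 1) : K)) • β ((A ^ i) δ) ((A ^ j) δ))
        = ∑ i ∈ range M, ∑ j ∈ range M,
          (((i + 1).factorial : K)⁻¹ * ((j + 1).factorial : K)⁻¹) • β ((A ^ i) δ) ((A ^ j) δ) := by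
      nth_rewrite 2 [hswap]
      rw [← sum_add_distrib]
      apply sum_congr rfl
      intro i _
      rw [← sum_add_distrib]
      apply sum_congr rfl
      intro j _
      rw [← add_smul]
      congr 1
      exact hcoef i j
    rw [← hTT, ← two_smul K, smul_smul]
    norm_num
  -- final assembly
  rw [hEu, hEv, map_sub]
  have hb1 : β (u - v) (u - v) = β u u - β u v - (β v u - β v v) := by
    simp only [map_sub, LinearMap.sub_apply]
    abel
  rw [hb1, keyD, keyV]
  have hvu : β u v = β v u := hsym u v
  rw [hvu]
  have hfin : ∑ k ∈ range M, (k.factorial : K)⁻¹ • (A₂ ^ k) (d ω)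
      + (1 / 2 : K) • ∑ k ∈ range M, (k.factorial : K)⁻¹ • (A₂ ^ k) (β ω ω) = 0 := by
    rw [smul_sum, ← sum_add_distrib]
    apply sum_eq_zero
    intro k _
    have h : (A₂ ^ k) (d ω) + (1 / 2 : K) • (A₂ ^ k) (β ω ω) = 0 := by
      rw [← map_smul, ← map_add, hMC, map_zero]
    rw [smul_comm ((1 : K) / 2) ((k.factorial : K)⁻¹), ← smul_add, h, smul_zero]
  have hBuu : β u u = ∑ k ∈ range M, (k.factorial : K)⁻¹ • (A₂ ^ k) (β ω ω) := by
    have keyBr : ∑ k ∈ range M, (k.factorial : K)⁻¹ • (A₂ ^ k) (β ω ω) = β u u := by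
      have hA2z : ∀ i, N ≤ i → (A₂ ^ i) = (0 : Module.End K V₂) := by
        intro i hi
        have h : A₂ ^ i = A₂ ^ (i - N) * A₂ ^ N := by
          rw [← pow_add]; congr 1; omega
        rw [h, hA2N, mul_zero]
      rw [hu, hbexp ω ω (fun m => (m.factorial : K)⁻¹) (fun m => (m.factorial : K)⁻¹),
        ← hext (fun i j => ((i.factorial : K)⁻¹ * (j.factorial : K)⁻¹) • β ((A ^ i) ω) ((A ^ j) ω))
          M le_rfl ?_]
      · rw [← tri_sum M (fun i j => ((i.factorial : K)⁻¹ * (j.factorial : K)⁻¹) • β ((A ^ i) ω) ((A ^ j) ω))]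
        apply sum_congr rfl
        intro k hk
        rw [L2 k ω ω, smul_sum]
        apply sum_congr rfl
        intro m hm
        rw [mem_range] at hm
        rw [smul_smul, fact_inv_choose K (by omega : m ≤ k)]
      · intro i j hij
        rw [hvan ω ω i j (by omega), smul_zero]
    exact keyBr.symm
  rw [hBuu]
  -- now pure module algebra
  set X := ∑ k ∈ range M, (k.factorial : K)⁻¹ • (A₂ ^ k) (d ω) with hX
  set P := ∑ k ∈ range M, (k.factorial : K)⁻¹ • (A₂ ^ k) (β ω ω) with hP
  set Q := β v u with hQ
  set R := β v v with hR
  have : X + Q - (1 / 2 : K) • R + (1 / 2 : K) • (P - Q - (Q - R)) = X + (1 / 2 : K) • P := by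
    module
  rw [this]
  exact hfin

theorem gauge_transformation_preserves_MC
    (K : Type) [Field K] [CharZero K] (g : DGLA K) (γ : g.carrier 0) (N : ℕ)
    (hnil0 : (g.br 0 0 0 (by norm_num) γ) ^ N = 0)
    (hnil1 : (g.br 0 1 1 (by norm_num) γ) ^ N = 0)
    (hnil2 : (g.br 0 2 2 (by norm_num) γ) ^ N = 0)
    (ω : g.carrier 1)
    (hMC : g.d 1 2 (by norm_num) ω
      + (1 / 2 : K) • g.br 1 1 2 (by norm_num) ω ω = 0)
    (E : g.carrier 1)
    (hE : E = ∑ k ∈ Finset.range N,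
        ((k.factorial : K)⁻¹ • ((g.br 0 1 1 (by norm_num) γ) ^ k) ω)
      - ∑ k ∈ Finset.range N,
        (((k + 1).factorial : K)⁻¹ •
          ((g.br 0 1 1 (by norm_num) γ) ^ k) (g.d 0 1 (by norm_num) γ))) :
    g.d 1 2 (by norm_num) E + (1 / 2 : K) • g.br 1 1 2 (by norm_num) E E = 0 := by
  rcases Nat.eq_zero_or_pos N with h0 | hN
  · subst h0
    have h1 : (1 : Module.End K (g.carrier 2)) = 0 := by simpa using hnil2
    have h2 := LinearMap.congr_fun h1
      (g.d 1 2 (by norm_num) E + (1 / 2 : K) • g.br 1 1 2 (by norm_num) E E)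
    simpa using h2
  · rw [hE]
    exact gauge_aux K (g.br 0 1 1 (by norm_num) γ) (g.br 0 2 2 (by norm_num) γ)
      (g.d 1 2 (by norm_num)) (g.br 1 1 2 (by norm_num)) (g.d 0 1 (by norm_num) γ) ω N hN
      hnil1 hnil2
      (fun x y => by
        have h := g.antisym 1 1 2 (by norm_num) (by norm_num) x y
        simpa [Int.negOnePow_one] using h)
      (fun x => by
        have h := g.leibniz 0 1 1 2 1 2 (by norm_num) (by norm_num) (by norm_num)
          (by norm_num) (by norm_num) (by norm_num) γ x
        simpa [Int.negOnePow_zero] using h)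
      (fun y z => by
        have h := g.jacobi 0 1 1 2 2 1 1 (by norm_num) (by norm_num) (by norm_num)
          (by norm_num) (by norm_num) (by norm_num) γ y z
        simpa [Int.negOnePow_zero] using h)
      (g.d_sq 0 1 2 (by norm_num) (by norm_num) γ)
      hMC
end

section
/- Let K be a field of characteristic 0, and let g, h be DG Lie algebras with a surjective quasi-isomorphism φ : g → h of DG Lie algebras. Then for every Maurer–Cartan element β ∈ ħ·h^1[[ħ]], there exists a Maurer–Cartan element α ∈ ħ·g^1[[ħ]] with φ(α) ≡ β modulo a gauge transformation — in the special case where g^0 = h^0 = 0 and g^{-1} = h^{-1} = 0, there exists α with φ(α) = β exactly, constructed order by order in ħ. -/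
/-! ### Auxiliary material for the proof -/

private lemma sum_range_eq_sum_Ioo {M : Type*} [AddCommGroup M] (f : ℕ → M) (n : ℕ)
    (h0 : f 0 = 0) (hn : f n = 0) :
    ∑ i ∈ Finset.range (n + 1), f i = ∑ i ∈ Finset.Ioo 0 n, f i := by
  refine (Finset.sum_subset ?_ ?_).symm
  · intro x hx; simp only [Finset.mem_Ioo] at hx; simp only [Finset.mem_range]; omega
  · intro x hx hx'
    simp only [Finset.mem_range] at hx
    simp only [Finset.mem_Ioo, not_and, not_lt] at hx'
    rcases Nat.eq_zero_or_pos x with h | h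
    · subst h; exact h0
    · have hxn : x = n := by
        have := hx' h
        omega
      subst hxn; exact hn

/-- One step of the order-by-order construction of the lift. -/
private def MCstep {K : Type} [Field K] (g : DGLA K) (c : ℕ → g.carrier 1)
    (corr : g.carrier 2 → g.carrier 1) (f : ℕ → g.carrier 1) (n : ℕ) : g.carrier 1 :=
  if n = 0 then 0 else
    c n - corr (g.d 1 2 (by norm_num) (c n)
      + (1 / 2 : K) • ∑ i ∈ Finset.Ioo 0 n, g.br 1 1 2 (by norm_num) (f i) (f (n - i)))

/-- History of the construction: `MChist n` records the values at indices `< n`. -/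
private def MChist {K : Type} [Field K] (g : DGLA K) (c : ℕ → g.carrier 1)
    (corr : g.carrier 2 → g.carrier 1) : ℕ → ℕ → g.carrier 1
  | 0 => fun _ => 0
  | n + 1 => Function.update (MChist g c corr n) n (MCstep g c corr (MChist g c corr n) n)

/-- The sequence constructed order by order. -/
private def MCseq {K : Type} [Field K] (g : DGLA K) (c : ℕ → g.carrier 1)
    (corr : g.carrier 2 → g.carrier 1) (n : ℕ) : g.carrier 1 :=
  MCstep g c corr (MChist g c corr n) n

private lemma MCstep_congr {K : Type} [Field K] (g : DGLA K) (c : ℕ → g.carrier 1)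
    (corr : g.carrier 2 → g.carrier 1) (f f' : ℕ → g.carrier 1) (n : ℕ)
    (h : ∀ i, 0 < i → i < n → f i = f' i) :
    MCstep g c corr f n = MCstep g c corr f' n := by
  unfold MCstep
  split
  · rfl
  · rename_i hn
    have hsum : (∑ i ∈ Finset.Ioo 0 n, g.br 1 1 2 (by norm_num) (f i) (f (n - i)))
        = ∑ i ∈ Finset.Ioo 0 n, g.br 1 1 2 (by norm_num) (f' i) (f' (n - i)) := by
      refine Finset.sum_congr rfl ?_
      intro i hi
      simp only [Finset.mem_Ioo] at hi
      rw [h i hi.1 hi.2, h (n - i) (by omega) (by omega)]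
    rw [hsum]

private lemma MChist_eq {K : Type} [Field K] (g : DGLA K) (c : ℕ → g.carrier 1)
    (corr : g.carrier 2 → g.carrier 1) :
    ∀ n i, i < n → MChist g c corr n i = MCseq g c corr i := by
  intro n
  induction n with
  | zero => intro i hi; omega
  | succ n ih =>
    intro i hi
    by_cases h : i = n
    · subst h
      show Function.update (MChist g c corr i) i (MCstep g c corr (MChist g c corr i) i) i = _
      rw [Function.update_self]
      rfl
    · show Function.update (MChist g c corr n) n (MCstep g c corr (MChist g c corr n) n) i = _
      rw [Function.update_of_ne h]
      exact ih i (by omega)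

private lemma MCseq_eq {K : Type} [Field K] (g : DGLA K) (c : ℕ → g.carrier 1)
    (corr : g.carrier 2 → g.carrier 1) (n : ℕ) :
    MCseq g c corr n = MCstep g c corr (MCseq g c corr) n :=
  MCstep_congr g c corr _ _ n (fun i _ h2 => MChist_eq g c corr n i h2)

/- STATEMENT 18: Let `φ : g → l` be a surjective quasi-isomorphism of DG Lie
algebras concentrated in degrees ≥ 1 (so `g^i = l^i = 0` for `i ≤ 0`; in
particular `g⁰ = g^{-1} = 0`).  Then every Maurer–Cartan element
`β = Σ_{j≥1} b_j ħ^j ∈ ħ·l¹[[ħ]]` lifts exactly: there is a Maurer–Cartan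
element `α ∈ ħ·g¹[[ħ]]` with `φ(α) = β` (constructed order by order in ħ).
MC equations are written coefficientwise. -/
theorem surjective_quasi_iso_lifts_MC
    (K : Type) [Field K] [CharZero K] (g l : DGLA K)
    (hg0 : ∀ i : ℤ, i ≤ 0 → ∀ x : g.carrier i, x = 0)
    (hl0 : ∀ i : ℤ, i ≤ 0 → ∀ y : l.carrier i, y = 0)
    (φ : ∀ i, g.carrier i →ₗ[K] l.carrier i)
    (hφd : ∀ i j (hij : i + 1 = j) (x : g.carrier i),
      φ j (g.d i j hij x) = l.d i j hij (φ i x))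
    (hφbr : ∀ i j k (h : i + j = k) (x : g.carrier i) (y : g.carrier j),
      φ k (g.br i j k h x y) = l.br i j k h (φ i x) (φ j y))
    (hφsurj : ∀ i : ℤ, Function.Surjective (φ i))
    (hqis_surj : ∀ (i i' i'' : ℤ) (h1 : i + 1 = i') (h2 : i' + 1 = i'')
      (y : l.carrier i'), l.d i' i'' h2 y = 0 →
      ∃ x : g.carrier i', g.d i' i'' h2 x = 0 ∧
        ∃ w : l.carrier i, φ i' x - y = l.d i i' h1 w)
    (hqis_inj : ∀ (i i' i'' : ℤ) (h1 : i + 1 = i') (h2 : i' + 1 = i'')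
      (x : g.carrier i'), g.d i' i'' h2 x = 0 →
      (∃ w : l.carrier i, φ i' x = l.d i i' h1 w) →
      ∃ v : g.carrier i, x = g.d i i' h1 v)
    (b : ℕ → l.carrier 1) (hb0 : b 0 = 0)
    (hMCb : ∀ n : ℕ,
      l.d 1 2 (by norm_num) (b n)
        + (1 / 2 : K) • ∑ i ∈ Finset.range (n + 1),
            l.br 1 1 2 (by norm_num) (b i) (b (n - i)) = 0) :
    ∃ a : ℕ → g.carrier 1, a 0 = 0 ∧
      (∀ n : ℕ,
        g.d 1 2 (by norm_num) (a n)
          + (1 / 2 : K) • ∑ i ∈ Finset.range (n + 1),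
              g.br 1 1 2 (by norm_num) (a i) (a (n - i)) = 0) ∧
      (∀ n : ℕ, φ 1 (a n) = b n) := by
  classical
  have pf12 : (1 : ℤ) + 1 = 2 := by norm_num
  have pf23 : (2 : ℤ) + 1 = 3 := by norm_num
  have pf123 : (1 : ℤ) + 2 = 3 := by norm_num
  have pf213 : (2 : ℤ) + 1 = 3 := by norm_num
  -- basic bracket identities in the relevant degrees
  have hbr21 : ∀ (x : g.carrier 2) (y : g.carrier 1),
      g.br 2 1 3 pf213 x y = - g.br 1 2 3 pf123 y x := by
    intro x y
    rw [g.antisym 2 1 3 pf213 pf123 x y]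
    norm_num [Int.negOnePow_even 2 ⟨1, by norm_num⟩]
  have hleib : ∀ x y : g.carrier 1,
      g.d 2 3 pf23 (g.br 1 1 2 pf12 x y)
        = - g.br 1 2 3 pf123 y (g.d 1 2 pf12 x) - g.br 1 2 3 pf123 x (g.d 1 2 pf12 y) := by
    intro x y
    rw [g.leibniz 1 1 2 3 2 2 pf12 pf23 pf12 pf12 pf213 pf123 x y, hbr21]
    norm_num [Int.negOnePow_one, sub_eq_add_neg]
  have hjac : ∀ x y z : g.carrier 1,
      g.br 1 2 3 pf123 x (g.br 1 1 2 pf12 y z)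
        = - g.br 1 2 3 pf123 z (g.br 1 1 2 pf12 x y)
          - g.br 1 2 3 pf123 y (g.br 1 1 2 pf12 x z) := by
    intro x y z
    rw [g.jacobi 1 1 1 2 3 2 2 pf12 pf123 pf12 pf213 pf12 pf123 x y z, hbr21]
    norm_num [Int.negOnePow_one, sub_eq_add_neg]
  -- the degree-0 part of l vanishes
  have hl0' : ∀ w : l.carrier 0, w = 0 := hl0 0 le_rfl
  -- choose set-theoretic section of φ in degree 1
  choose lift hlift using hφsurj 1
  -- the key correction step coming from the quasi-isomorphism property
  have key : ∀ z : g.carrier 2, g.d 2 3 pf23 z = 0 → φ 2 z = 0 →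
      ∃ v : g.carrier 1, g.d 1 2 pf12 v = z ∧ φ 1 v = 0 := by
    intro z hz1 hz2
    obtain ⟨v0, hv0⟩ := hqis_inj 1 2 3 pf12 pf23 z hz1 ⟨0, by simp [hz2]⟩
    have hcl : l.d 1 2 pf12 (φ 1 v0) = 0 := by
      rw [← hφd 1 2 pf12 v0, ← hv0, hz2]
    obtain ⟨u, hu1, w, hw⟩ := hqis_surj 0 1 2 (by norm_num) pf12 (φ 1 v0) hcl
    rw [hl0' w, map_zero] at hw
    refine ⟨v0 - u, ?_, ?_⟩
    · rw [map_sub, hu1, sub_zero]; exact hv0.symm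
    · rw [map_sub, sub_eq_zero]
      exact (sub_eq_zero.mp hw).symm
  choose! corr hcorrd hcorrφ using key
  set c : ℕ → g.carrier 1 := fun n => lift (b n) with hc
  set a : ℕ → g.carrier 1 := MCseq g c corr with ha
  have hφc : ∀ n, φ 1 (c n) = b n := fun n => hlift (b n)
  have ha0 : a 0 = 0 := by
    rw [ha]; unfold MCseq MCstep; simp
  have ha_succ : ∀ n : ℕ, n ≠ 0 →
      a n = c n - corr (g.d 1 2 pf12 (c n)
        + (1 / 2 : K) • ∑ i ∈ Finset.Ioo 0 n, g.br 1 1 2 pf12 (a i) (a (n - i))) := by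
    intro n hn
    rw [ha, MCseq_eq g c corr n]
    unfold MCstep
    rw [if_neg hn]
  -- main inductive claim
  have main : ∀ n : ℕ,
      (g.d 1 2 pf12 (a n)
        + (1 / 2 : K) • ∑ i ∈ Finset.Ioo 0 n, g.br 1 1 2 pf12 (a i) (a (n - i)) = 0)
      ∧ φ 1 (a n) = b n := by
    intro n
    induction n using Nat.strong_induction_on with
    | _ n ih =>
    rcases Nat.eq_zero_or_pos n with hn | hn
    · subst hn
      constructor <;> simp [ha0, hb0]
    · have hn' : n ≠ 0 := by omega
      have hdai : ∀ m, m < n → g.d 1 2 pf12 (a m)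
          = -((1 / 2 : K) • ∑ p ∈ Finset.Ioo 0 m, g.br 1 1 2 pf12 (a p) (a (m - p))) :=
        fun m hm => eq_neg_of_add_eq_zero_left (ih m hm).1
      have hφai : ∀ i, i < n → φ 1 (a i) = b i := fun i hi => (ih i hi).2
      have han := ha_succ n hn'
      set ξ : g.carrier 2 :=
        (1 / 2 : K) • ∑ i ∈ Finset.Ioo 0 n, g.br 1 1 2 pf12 (a i) (a (n - i)) with hξ
      set z : g.carrier 2 := g.d 1 2 pf12 (c n) + ξ with hz
      -- the sigma-type index set for the triple sums
      set Sg : Finset ((_ : ℕ) × ℕ) :=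
        (Finset.Ioo 0 n).sigma (fun i => Finset.Ioo 0 (n - i)) with hSg
      set T : g.carrier 3 :=
        ∑ x ∈ Sg, g.br 1 2 3 pf123 (a x.1) (g.br 1 1 2 pf12 (a x.2) (a (n - x.1 - x.2)))
        with hT
      have memSg : ∀ x : (_ : ℕ) × ℕ, x ∈ Sg ↔ (0 < x.1 ∧ x.1 < n ∧ 0 < x.2 ∧ x.1 + x.2 < n) := by
        intro x
        rw [hSg]
        simp only [Finset.mem_sigma, Finset.mem_Ioo]
        omega
      have hT1 : ∑ x ∈ Sg, g.br 1 2 3 pf123 (a (n - x.1 - x.2))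
          (g.br 1 1 2 pf12 (a x.1) (a x.2)) = T := by
        rw [hT]
        refine Finset.sum_nbij'
          (i := fun x : (_ : ℕ) × ℕ => (⟨n - x.1 - x.2, x.1⟩ : (_ : ℕ) × ℕ))
          (j := fun x : (_ : ℕ) × ℕ => (⟨x.2, n - x.1 - x.2⟩ : (_ : ℕ) × ℕ))
          ?_ ?_ ?_ ?_ ?_
        · intro x hx; rw [memSg] at *; simp only at *; omega
        · intro x hx; rw [memSg] at *; simp only at *; omega
        · intro x hx; rw [memSg] at hx
          obtain ⟨x1, x2⟩ := x
          simp only at hx ⊢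
          have h1 : n - (n - x1 - x2) - x1 = x2 := by omega
          rw [h1]
        · intro x hx; rw [memSg] at hx
          obtain ⟨x1, x2⟩ := x
          simp only at hx ⊢
          have h1 : n - x2 - (n - x1 - x2) = x1 := by omega
          rw [h1]
        · intro x hx; rw [memSg] at hx
          obtain ⟨x1, x2⟩ := x
          simp only at hx ⊢
          have h1 : n - (n - x1 - x2) - x1 = x2 := by omega
          rw [h1]
      have hT2 : ∑ x ∈ Sg, g.br 1 2 3 pf123 (a x.2)
          (g.br 1 1 2 pf12 (a x.1) (a (n - x.1 - x.2))) = T := by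
        rw [hT]
        refine Finset.sum_nbij'
          (i := fun x : (_ : ℕ) × ℕ => (⟨x.2, x.1⟩ : (_ : ℕ) × ℕ))
          (j := fun x : (_ : ℕ) × ℕ => (⟨x.2, x.1⟩ : (_ : ℕ) × ℕ))
          ?_ ?_ ?_ ?_ ?_
        · intro x hx; rw [memSg] at *; simp only at *; omega
        · intro x hx; rw [memSg] at *; simp only at *; omega
        · intro x _; rfl
        · intro x _; rfl
        · intro x hx; rw [memSg] at hx
          obtain ⟨x1, x2⟩ := x
          simp only at hx ⊢
          have h1 : n - x2 - x1 = n - x1 - x2 := by omega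
          rw [h1]
      have hT0 : T = 0 := by
        have hTT : T = -T - T := by
          calc T = ∑ x ∈ Sg,
              (- g.br 1 2 3 pf123 (a (n - x.1 - x.2)) (g.br 1 1 2 pf12 (a x.1) (a x.2))
               - g.br 1 2 3 pf123 (a x.2) (g.br 1 1 2 pf12 (a x.1) (a (n - x.1 - x.2)))) := by
                rw [hT]
                exact Finset.sum_congr rfl fun x _ =>
                  hjac (a x.1) (a x.2) (a (n - x.1 - x.2))
            _ = -T - T := by
                rw [Finset.sum_sub_distrib, Finset.sum_neg_distrib, hT1, hT2]
        have h0 : T + T + T = 0 := by nth_rewrite 1 [hTT]; abel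
        have h3 : (3 : K) • T = 0 := by
          rw [show (3 : K) = 1 + 1 + 1 by norm_num, add_smul, add_smul, one_smul, h0]
        rcases smul_eq_zero.mp h3 with h | h
        · exact absurd h (by norm_num)
        · exact h
      -- d ξ = 0
      have e2 : ∑ i ∈ Finset.Ioo 0 n, g.br 1 2 3 pf123 (a (n - i)) (g.d 1 2 pf12 (a i))
          = ∑ i ∈ Finset.Ioo 0 n, g.br 1 2 3 pf123 (a i) (g.d 1 2 pf12 (a (n - i))) := by
        refine Finset.sum_nbij' (i := fun k => n - k) (j := fun k => n - k) ?_ ?_ ?_ ?_ ?_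
        · intro k hk; simp only [Finset.mem_Ioo] at *; omega
        · intro k hk; simp only [Finset.mem_Ioo] at *; omega
        · intro k hk; simp only [Finset.mem_Ioo] at hk; show n - (n - k) = k; omega
        · intro k hk; simp only [Finset.mem_Ioo] at hk; show n - (n - k) = k; omega
        · intro k hk; simp only [Finset.mem_Ioo] at hk
          have h1 : n - (n - k) = k := by omega
          rw [h1]
      have e3 : g.d 2 3 pf23 ξ
          = - ∑ i ∈ Finset.Ioo 0 n, g.br 1 2 3 pf123 (a i) (g.d 1 2 pf12 (a (n - i))) := by
        rw [hξ, map_smul, map_sum]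
        rw [Finset.sum_congr rfl fun i (_ : i ∈ Finset.Ioo 0 n) => hleib (a i) (a (n - i))]
        rw [Finset.sum_sub_distrib, Finset.sum_neg_distrib, e2]
        set S1 := ∑ i ∈ Finset.Ioo 0 n, g.br 1 2 3 pf123 (a i) (g.d 1 2 pf12 (a (n - i)))
        have hS : -S1 - S1 = (-2 : K) • S1 := by
          rw [neg_smul, two_smul]; abel
        rw [hS, smul_smul, show (1 / 2 : K) * (-2) = -1 by norm_num, neg_one_smul]
      have e4 : ∑ i ∈ Finset.Ioo 0 n, g.br 1 2 3 pf123 (a i) (g.d 1 2 pf12 (a (n - i)))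
          = -((1 / 2 : K) • T) := by
        have step1 : ∀ i ∈ Finset.Ioo 0 n,
            g.br 1 2 3 pf123 (a i) (g.d 1 2 pf12 (a (n - i)))
              = -((1 / 2 : K) • ∑ p ∈ Finset.Ioo 0 (n - i),
                  g.br 1 2 3 pf123 (a i) (g.br 1 1 2 pf12 (a p) (a (n - i - p)))) := by
          intro i hi
          simp only [Finset.mem_Ioo] at hi
          rw [hdai (n - i) (by omega), map_neg, map_smul, map_sum]
        calc ∑ i ∈ Finset.Ioo 0 n, g.br 1 2 3 pf123 (a i) (g.d 1 2 pf12 (a (n - i)))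
            = ∑ i ∈ Finset.Ioo 0 n, -((1 / 2 : K) • ∑ p ∈ Finset.Ioo 0 (n - i),
                g.br 1 2 3 pf123 (a i) (g.br 1 1 2 pf12 (a p) (a (n - i - p)))) :=
              Finset.sum_congr rfl step1
          _ = -((1 / 2 : K) • ∑ i ∈ Finset.Ioo 0 n, ∑ p ∈ Finset.Ioo 0 (n - i),
                g.br 1 2 3 pf123 (a i) (g.br 1 1 2 pf12 (a p) (a (n - i - p)))) := by
              rw [Finset.sum_neg_distrib, Finset.smul_sum]
          _ = -((1 / 2 : K) • T) := by
              exact congrArg (fun S => -((1 / 2 : K) • S)) (Finset.sum_sigma' _ _ _)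
      have hdξ : g.d 2 3 pf23 ξ = 0 := by
        rw [e3, e4, hT0, smul_zero, neg_neg]
      -- z is closed
      have hz1 : g.d 2 3 pf23 z = 0 := by
        rw [hz, map_add, g.d_sq 1 2 3 pf12 pf23 (c n), hdξ, add_zero]
      -- φ z = 0
      have hφz : φ 2 z = 0 := by
        rw [hz, hξ, map_add, map_smul, map_sum]
        rw [hφd 1 2 pf12 (c n), hφc n]
        have hterm : ∀ i ∈ Finset.Ioo 0 n,
            φ 2 (g.br 1 1 2 pf12 (a i) (a (n - i)))
              = l.br 1 1 2 pf12 (b i) (b (n - i)) := by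
          intro i hi
          simp only [Finset.mem_Ioo] at hi
          rw [hφbr, hφai i hi.2, hφai (n - i) (by omega)]
        rw [Finset.sum_congr rfl hterm]
        have hmc := hMCb n
        rwa [sum_range_eq_sum_Ioo (fun i => l.br 1 1 2 pf12 (b i) (b (n - i))) n
          (by simp [hb0]) (by simp [Nat.sub_self, hb0])] at hmc
      have hcd := hcorrd z hz1 hφz
      have hcφ := hcorrφ z hz1 hφz
      constructor
      · rw [han, map_sub, hcd, hz]
        abel
      · rw [han, map_sub, hcφ, sub_zero, hφc n]
  refine ⟨a, ha0, ?_, fun n => (main n).2⟩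
  intro n
  rw [sum_range_eq_sum_Ioo (fun i => g.br 1 1 2 pf12 (a i) (a (n - i))) n
    (by simp [ha0]) (by simp [Nat.sub_self, ha0])]
  exact (main n).1
end
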